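/- Let r ≥ 1 and k ≥ 0 be integers and let F be the prim normal form map. The Fréchet derivative of F at a point (t, b, c) fails to be injective if and only if p_i′(t) = 0 for every 0 ≤ i ≤ k (where p_i′ denotes the derivative of p_i in its variable); moreover, when this holds, the kernel of the derivative of F at (t, b, c) is exactly the one-dimensional line spanned by the coordinate direction (1, 0, 0) (the t-axis). -/

import Mathlib

open Polynomial

/-- The family of polynomials `p_0, p_1, …, p_k` of the prim normal form:
`p_0(x) = x^(r+1) + ∑_{m=1}^{r-1} b_m x^m` and, for `1 ≤ i ≤ k`,
`p_i(x) = ∑_{m=1}^{r} c_{i,m} x^m`. -/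
noncomputable def primPoly (r k : ℕ) (b : Fin (r - 1) → ℝ) (c : Fin k × Fin r → ℝ) :
    Fin (k + 1) → Polynomial ℝ :=
  Fin.cons (X ^ (r + 1) + ∑ m : Fin (r - 1), C (b m) * X ^ ((m : ℕ) + 1))
    (fun i => ∑ m : Fin r, C (c (i, m)) * X ^ ((m : ℕ) + 1))

/-- The prim normal form map
`F(t, b, c) = ((p_0(t), …, p_k(t)), b, c)`. -/
noncomputable def primNormalForm (r k : ℕ) :
    ℝ × (Fin (r - 1) → ℝ) × (Fin k × Fin r → ℝ) →
      (Fin (k + 1) → ℝ) × (Fin (r - 1) → ℝ) × (Fin k × Fin r → ℝ) :=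
  fun x => (fun i => (primPoly r k x.2.1 x.2.2 i).eval x.1, x.2.1, x.2.2)

namespace PrimAux

abbrev E (r k : ℕ) := ℝ × (Fin (r - 1) → ℝ) × (Fin k × Fin r → ℝ)

noncomputable def fstL (r k : ℕ) : E r k →L[ℝ] ℝ := ContinuousLinearMap.fst ℝ ℝ _

noncomputable def bL (r k : ℕ) (m : Fin (r - 1)) : E r k →L[ℝ] ℝ :=
  (ContinuousLinearMap.proj m).comp
    ((ContinuousLinearMap.fst ℝ _ _).comp (ContinuousLinearMap.snd ℝ ℝ _))

noncomputable def cL (r k : ℕ) (j : Fin k) (m : Fin r) : E r k →L[ℝ] ℝ :=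
  (ContinuousLinearMap.proj (j, m)).comp
    ((ContinuousLinearMap.snd ℝ _ _).comp (ContinuousLinearMap.snd ℝ ℝ _))

/-- The candidate derivative of the prim normal form at `(t, b, c)`. -/
noncomputable def D (r k : ℕ) (t : ℝ) (b : Fin (r - 1) → ℝ) (c : Fin k × Fin r → ℝ) :
    E r k →L[ℝ] (Fin (k + 1) → ℝ) × (Fin (r - 1) → ℝ) × (Fin k × Fin r → ℝ) :=
  (ContinuousLinearMap.pi (Fin.cons
      (((derivative (primPoly r k b c 0)).eval t) • fstL r k +
        ∑ m : Fin (r - 1), (t ^ ((m : ℕ) + 1)) • bL r k m)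
      (fun j => ((derivative (primPoly r k b c j.succ)).eval t) • fstL r k +
        ∑ m : Fin r, (t ^ ((m : ℕ) + 1)) • cL r k j m))).prod
    (ContinuousLinearMap.snd ℝ ℝ _)

lemma D_apply_fst (r k : ℕ) (t : ℝ) (b : Fin (r - 1) → ℝ) (c : Fin k × Fin r → ℝ)
    (i : Fin (k + 1)) (v : E r k) :
    (D r k t b c v).1 i = (derivative (primPoly r k b c i)).eval t * v.1 +
      Fin.cases (∑ m : Fin (r - 1), t ^ ((m : ℕ) + 1) * v.2.1 m)
        (fun j => ∑ m : Fin r, t ^ ((m : ℕ) + 1) * v.2.2 (j, m)) i := by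
  induction i using Fin.cases <;> simp [D, fstL, bL, cL]

lemma D_apply_snd (r k : ℕ) (t : ℝ) (b : Fin (r - 1) → ℝ) (c : Fin k × Fin r → ℝ)
    (v : E r k) : (D r k t b c v).2 = v.2 := rfl

lemma powAux (r k : ℕ) (t : ℝ) (b : Fin (r - 1) → ℝ) (c : Fin k × Fin r → ℝ) (n : ℕ) :
    HasFDerivAt (fun x : E r k => x.1 ^ n) (((n : ℝ) * t ^ (n - 1)) • fstL r k) (t, b, c) := by
  have := (hasDerivAt_pow n t).comp_hasFDerivAt (t, b, c)
    (hasFDerivAt_fst (𝕜 := ℝ) (p := ((t, b, c) : E r k)))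
  simpa [fstL, Function.comp_def] using this

lemma hasD (r k : ℕ) (t : ℝ) (b : Fin (r - 1) → ℝ) (c : Fin k × Fin r → ℝ) :
    HasFDerivAt (primNormalForm r k) (D r k t b c) (t, b, c) := by
  refine HasFDerivAt.prodMk ?_ (hasFDerivAt_snd)
  rw [hasFDerivAt_pi]
  intro i
  induction i using Fin.cases with
  | zero =>
    rw [show (Fin.cons
        (((derivative (primPoly r k b c 0)).eval t) • fstL r k +
          ∑ m : Fin (r - 1), (t ^ ((m : ℕ) + 1)) • bL r k m)
        (fun j => ((derivative (primPoly r k b c j.succ)).eval t) • fstL r k +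
          ∑ m : Fin r, (t ^ ((m : ℕ) + 1)) • cL r k j m) : Fin (k + 1) → E r k →L[ℝ] ℝ) 0
      = ((derivative (primPoly r k b c 0)).eval t) • fstL r k +
          ∑ m : Fin (r - 1), (t ^ ((m : ℕ) + 1)) • bL r k m from Fin.cons_zero _ _]
    have hfun : (fun x : E r k => (primPoly r k x.2.1 x.2.2 0).eval x.1)
        = fun x => x.1 ^ (r + 1) + ∑ m : Fin (r - 1), x.2.1 m * x.1 ^ ((m : ℕ) + 1) := by
      funext x; simp [primPoly, eval_finset_sum]
    rw [show (fun x : E r k => (primPoly r k x.2.1 x.2.2 · |>.eval x.1) 0)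
        = fun x : E r k => (primPoly r k x.2.1 x.2.2 0).eval x.1 from rfl, hfun]
    have h1 := powAux r k t b c (r + 1)
    have h2 : ∀ m : Fin (r - 1),
        HasFDerivAt (fun x : E r k => x.2.1 m * x.1 ^ ((m : ℕ) + 1))
          ((b m) • ((((m : ℕ) + 1 : ℕ) : ℝ) * t ^ ((m : ℕ) + 1 - 1)) • fstL r k
            + (t ^ ((m : ℕ) + 1)) • bL r k m) (t, b, c) :=
      fun m => ((bL r k m).hasFDerivAt).mul (powAux r k t b c ((m : ℕ) + 1))
    have h := h1.fun_add (HasFDerivAt.fun_sum (fun m (_ : m ∈ Finset.univ) => h2 m))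
    convert h using 1
    refine ContinuousLinearMap.ext fun v => ?_
    obtain ⟨s, β, γ⟩ := v
    simp [fstL, bL, primPoly, derivative_sum, eval_finset_sum, Finset.sum_add_distrib,
      add_mul, Finset.sum_mul]
    ring_nf
  | succ j =>
    rw [show (Fin.cons
        (((derivative (primPoly r k b c 0)).eval t) • fstL r k +
          ∑ m : Fin (r - 1), (t ^ ((m : ℕ) + 1)) • bL r k m)
        (fun j => ((derivative (primPoly r k b c j.succ)).eval t) • fstL r k +
          ∑ m : Fin r, (t ^ ((m : ℕ) + 1)) • cL r k j m) : Fin (k + 1) → E r k →L[ℝ] ℝ) j.succ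
      = ((derivative (primPoly r k b c j.succ)).eval t) • fstL r k +
          ∑ m : Fin r, (t ^ ((m : ℕ) + 1)) • cL r k j m from Fin.cons_succ _ _ _]
    have hfun : (fun x : E r k => (primPoly r k x.2.1 x.2.2 j.succ).eval x.1)
        = fun x => ∑ m : Fin r, x.2.2 (j, m) * x.1 ^ ((m : ℕ) + 1) := by
      funext x; simp [primPoly, eval_finset_sum]
    rw [show (fun x : E r k => (primPoly r k x.2.1 x.2.2 · |>.eval x.1) j.succ)
        = fun x : E r k => (primPoly r k x.2.1 x.2.2 j.succ).eval x.1 from rfl, hfun]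
    have h2 : ∀ m : Fin r,
        HasFDerivAt (fun x : E r k => x.2.2 (j, m) * x.1 ^ ((m : ℕ) + 1))
          ((c (j, m)) • ((((m : ℕ) + 1 : ℕ) : ℝ) * t ^ ((m : ℕ) + 1 - 1)) • fstL r k
            + (t ^ ((m : ℕ) + 1)) • cL r k j m) (t, b, c) :=
      fun m => ((cL r k j m).hasFDerivAt).mul (powAux r k t b c ((m : ℕ) + 1))
    have h := HasFDerivAt.fun_sum (fun m (_ : m ∈ Finset.univ) => h2 m)
    convert h using 1
    refine ContinuousLinearMap.ext fun v => ?_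
    obtain ⟨s, β, γ⟩ := v
    simp [fstL, cL, primPoly, derivative_sum, eval_finset_sum, Finset.sum_add_distrib,
      add_mul, Finset.sum_mul]
    exact Finset.sum_congr rfl fun i _ => by ring

end PrimAux

open PrimAux

/-- The Fréchet derivative of the prim normal form `F` at `(t, b, c)` fails to be
injective iff `p_i'(t) = 0` for every `0 ≤ i ≤ k`; and in that case its kernel is
exactly the line spanned by the `t`-axis direction `(1, 0, 0)`. -/
theorem stmt0 (r k : ℕ) (hr : 1 ≤ r) (t : ℝ) (b : Fin (r - 1) → ℝ)
    (c : Fin k × Fin r → ℝ) :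
    (¬ Function.Injective (fderiv ℝ (primNormalForm r k) (t, b, c)) ↔
      ∀ i : Fin (k + 1), (derivative (primPoly r k b c i)).eval t = 0) ∧
    ((∀ i : Fin (k + 1), (derivative (primPoly r k b c i)).eval t = 0) →
      LinearMap.ker (fderiv ℝ (primNormalForm r k) (t, b, c)).toLinearMap =
        Submodule.span ℝ {((1 : ℝ), (0 : Fin (r - 1) → ℝ), (0 : Fin k × Fin r → ℝ))}) := by
  have hfd : fderiv ℝ (primNormalForm r k) (t, b, c) = D r k t b c :=
    (hasD r k t b c).fderiv
  rw [hfd]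
  -- key computation: `D` applied to `(a, 0, 0)`
  have hone : ∀ a : ℝ, (∀ i : Fin (k + 1), (derivative (primPoly r k b c i)).eval t = 0) →
      D r k t b c (a, 0, 0) = 0 := by
    intro a hall
    refine Prod.ext ?_ rfl
    funext i
    rw [D_apply_fst]
    simp [hall i]
    induction i using Fin.cases <;> simp
  constructor
  · constructor
    · intro hni
      by_contra hne
      push_neg at hne
      obtain ⟨i, hi⟩ := hne
      apply hni
      intro v w hvw
      have h2 : v.2 = w.2 := by
        have := congrArg Prod.snd hvw
        simpa [D_apply_snd] using this
      have h1 : v.1 = w.1 := by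
        have := congrArg (fun z => z.1 i) hvw
        simp only [D_apply_fst, h2] at this
        have := add_right_cancel this
        exact mul_left_cancel₀ hi this
      exact Prod.ext h1 h2
    · intro hall hinj
      have h0 : D r k t b c (1, 0, 0) = D r k t b c 0 := by
        rw [map_zero, hone 1 hall]
      have := hinj h0
      exact one_ne_zero (congrArg Prod.fst this)
  · intro hall
    ext v
    simp only [LinearMap.mem_ker, Submodule.mem_span_singleton]
    constructor
    · intro hv
      have h2 : v.2 = 0 := by
        have := congrArg Prod.snd hv
        simpa [D_apply_snd] using this
      refine ⟨v.1, ?_⟩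
      have hv10 : v = (v.1, 0, 0) := Prod.ext rfl h2
      rw [hv10]
      refine Prod.ext (by simp) (by simp)
    · rintro ⟨a, rfl⟩
      have : (a • ((1 : ℝ), (0 : Fin (r - 1) → ℝ), (0 : Fin k × Fin r → ℝ)))
          = ((a : ℝ), (0 : Fin (r - 1) → ℝ), (0 : Fin k × Fin r → ℝ)) := by
        refine Prod.ext (by simp) (by simp)
      rw [this]
      exact hone a hall
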